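/- In ℝ², let Ω = {(x,y) : y ≥ cos(2πx)}, V(x,y) = xy, and consider the boundary dynamics x'_t = ϑ(x_t) where ϑ(x) = −(cos(2πx) − 2πx sin(2πx))/(1 + 4π² sin²(2πx)). Then for every sufficiently large integer N, the equation 2πx = cot(2πx) has exactly two solutions in [N − 1/2, N + 1/2]: one, denoted (N)¹_*, near N − 1/2, and one, denoted (N)²_*, near N, and these are precisely the zeros of ϑ in that interval; moreover (N)¹_* − (N − 1/2) and (N)²_* − N are both of order 1/N. -/

import Mathlib

open Real

/-- The tangential boundary velocity for a delta mass sliding along the graph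
`y = cos (2πx)` under the projected field `P(-∇V)` with `V(x,y) = xy`. -/
noncomputable def thetaField (x : ℝ) : ℝ :=
  -(Real.cos (2 * π * x) - 2 * π * x * Real.sin (2 * π * x)) /
    (1 + 4 * π ^ 2 * (Real.sin (2 * π * x)) ^ 2)

noncomputable def fAux (x : ℝ) : ℝ := Real.cos (2*π*x) - 2*π*x * Real.sin (2*π*x)

noncomputable def hAux (x : ℝ) : ℝ := Real.cos (2*π*x) / Real.sin (2*π*x) - 2*π*x

lemma fAux_cont : Continuous fAux := by unfold fAux; fun_prop

lemma sin_ne_of_fAux (x : ℝ) (hf : fAux x = 0) : Real.sin (2*π*x) ≠ 0 := by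
  intro hs
  have hc := Real.sin_sq_add_cos_sq (2*π*x)
  unfold fAux at hf
  rw [hs] at hf hc
  nlinarith

lemma hAux_deriv (x : ℝ) (hs : Real.sin (2*π*x) ≠ 0) :
    HasDerivAt hAux (-(2*π)/(Real.sin (2*π*x))^2 - 2*π) x := by
  have h1 : HasDerivAt (fun x : ℝ => 2*π*x) (2*π) x := by
    simpa using (hasDerivAt_id x).const_mul (2*π)
  have hc : HasDerivAt (fun x : ℝ => Real.cos (2*π*x)) (-Real.sin (2*π*x) * (2*π)) x :=
    (Real.hasDerivAt_cos (2*π*x)).comp x h1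
  have hsd : HasDerivAt (fun x : ℝ => Real.sin (2*π*x)) (Real.cos (2*π*x) * (2*π)) x :=
    (Real.hasDerivAt_sin (2*π*x)).comp x h1
  have hd := (hc.div hsd hs).sub h1
  have hp := Real.sin_sq_add_cos_sq (2*π*x)
  have key : -Real.sin (2*π*x) * (2*π) * Real.sin (2*π*x) - Real.cos (2*π*x) * (Real.cos (2*π*x) * (2*π)) = -(2*π) := by
    linear_combination (-(2*π)) * hp
  rw [key] at hd
  exact hd

lemma hAux_anti {l r : ℝ} (h : ∀ x ∈ Set.Ioo l r, Real.sin (2*π*x) ≠ 0) :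
    StrictAntiOn hAux (Set.Ioo l r) := by
  apply strictAntiOn_of_deriv_neg (convex_Ioo l r)
  · intro x hx
    exact ((hAux_deriv x (h x hx)).continuousAt).continuousWithinAt
  · intro x hx
    rw [interior_Ioo] at hx
    rw [(hAux_deriv x (h x hx)).deriv]
    have h2 : (0:ℝ) < (Real.sin (2*π*x))^2 :=
      lt_of_le_of_ne (sq_nonneg _) (Ne.symm (pow_ne_zero 2 (h x hx)))
    have h3 : 0 < 2*π/(Real.sin (2*π*x))^2 := by positivity
    rw [neg_div]
    linarith [Real.pi_pos]

lemma sin_shift (x : ℝ) (N : ℕ) : Real.sin (2*π*x) = Real.sin (2*π*(x - N)) := by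
  rw [show 2*π*x = 2*π*(x - N) + N * (2*π) by ring, Real.sin_add_nat_mul_two_pi]

lemma cos_shift (x : ℝ) (N : ℕ) : Real.cos (2*π*x) = Real.cos (2*π*(x - N)) := by
  rw [show 2*π*x = 2*π*(x - N) + N * (2*π) by ring, Real.cos_add_nat_mul_two_pi]

lemma sin_neg_on (N : ℕ) (x : ℝ) (hx : x ∈ Set.Ioo ((N:ℝ) - 1/2) (N:ℝ)) :
    Real.sin (2*π*x) < 0 := by
  rw [sin_shift x N]
  have h1 : -π < 2*π*(x - N) := by nlinarith [Real.pi_pos, hx.1]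
  have h2 : 2*π*(x - N) < 0 := by nlinarith [Real.pi_pos, hx.2]
  exact Real.sin_neg_of_neg_of_neg_pi_lt h2 h1

lemma sin_pos_on (N : ℕ) (x : ℝ) (hx : x ∈ Set.Ioo ((N:ℝ)) ((N:ℝ) + 1/2)) :
    Real.sin (2*π*x) > 0 := by
  rw [sin_shift x N]
  have h1 : 0 < 2*π*(x - N) := by nlinarith [Real.pi_pos, hx.1]
  have h2 : 2*π*(x - N) < π := by nlinarith [Real.pi_pos, hx.2]
  exact Real.sin_pos_of_pos_of_lt_pi h1 h2

lemma fAux_at_half_sub (N : ℕ) : fAux ((N:ℝ) - 1/2) = -1 := by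
  unfold fAux
  rw [show 2*π*((N:ℝ) - 1/2) = (N:ℝ)*(2*π) - π by ring]
  rw [Real.cos_nat_mul_two_pi_sub_pi]
  rw [show (N:ℝ)*(2*π) - π = -π + (N:ℝ)*(2*π) by ring, Real.sin_add_nat_mul_two_pi]
  simp

lemma fAux_at_nat (N : ℕ) : fAux (N:ℝ) = 1 := by
  unfold fAux
  rw [show 2*π*(N:ℝ) = (N:ℝ)*(2*π) by ring]
  rw [Real.cos_nat_mul_two_pi]
  rw [show (N:ℝ)*(2*π) = 0 + (N:ℝ)*(2*π) by ring, Real.sin_add_nat_mul_two_pi]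
  simp

lemma fAux_at_half_add (N : ℕ) : fAux ((N:ℝ) + 1/2) = -1 := by
  unfold fAux
  rw [show 2*π*((N:ℝ) + 1/2) = (N:ℝ)*(2*π) + π by ring]
  rw [Real.cos_nat_mul_two_pi_add_pi]
  rw [show (N:ℝ)*(2*π) + π = π + (N:ℝ)*(2*π) by ring, Real.sin_add_nat_mul_two_pi]
  simp

lemma hAux_eq_zero_iff (x : ℝ) (hs : Real.sin (2*π*x) ≠ 0) :
    hAux x = 0 ↔ fAux x = 0 := by
  unfold hAux fAux
  rw [sub_eq_zero, div_eq_iff hs, sub_eq_zero]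

lemma bound_lemma (N : ℕ) (hN : 1 ≤ N) (x u : ℝ)
    (hx1 : π * N ≤ 2*π*x) (hx2 : 2*π*x ≤ 4*π*N)
    (hu : u ∈ Set.Ioo (0:ℝ) π)
    (heq : Real.cos u = 2*π*x * Real.sin u) :
    1/(16*π^2) / N ≤ u/(2*π) ∧ u/(2*π) ≤ 1/(2*π^2) / N := by
  have hpi := Real.pi_pos
  have hpi1 := Real.pi_gt_three
  have hN1 : (1:ℝ) ≤ N := by exact_mod_cast hN
  have hNpos : (0:ℝ) < N := by linarith
  have hxpos : 0 < 2*π*x := by nlinarith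
  have hsinpos : 0 < Real.sin u := Real.sin_pos_of_pos_of_lt_pi hu.1 hu.2
  have hcospos : 0 < Real.cos u := by rw [heq]; positivity
  have hult : u < π/2 := by
    by_contra hc
    push_neg at hc
    have := Real.cos_nonpos_of_pi_div_two_le_of_le hc (by linarith [hu.2])
    linarith
  -- upper bound
  have htan : u < Real.tan u := Real.lt_tan hu.1 hult
  have htan2 : Real.tan u = Real.sin u / Real.cos u := Real.tan_eq_sin_div_cos u
  have hucos : u * Real.cos u < Real.sin u := by
    rw [htan2] at htan
    calc u * Real.cos u < (Real.sin u / Real.cos u) * Real.cos u := by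
          exact mul_lt_mul_of_pos_right htan hcospos
      _ = Real.sin u := by field_simp
  have hmul : u * (2*π*x) < 1 := by
    nlinarith [hucos, heq, hsinpos]
  have hupp : u < 1/(π*N) := by
    rw [lt_div_iff₀ (by positivity)]
    nlinarith [hu.1]
  -- lower bound
  have hu1 : u < 1 := by
    have : 1/(π*(N:ℝ)) ≤ 1 := by rw [div_le_one (by positivity)]; nlinarith
    linarith
  have hcoshalf : (1:ℝ)/2 ≤ Real.cos u := by
    nlinarith [Real.one_sub_sq_div_two_le_cos (x := u), hu.1]
  have hsinle : Real.sin u ≤ u := (Real.sin_lt hu.1).le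
  have hmul2 : 1 ≤ 2 * (u * (2*π*x)) := by
    nlinarith [heq, hsinpos]
  have hlow : 1/(8*π*N) ≤ u := by
    rw [div_le_iff₀ (by positivity)]
    nlinarith [hu.1]
  constructor
  · have e1 : 1/(16*π^2) / (N:ℝ) = (1/(8*π*N))/(2*π) := by
      field_simp; ring
    rw [e1]
    exact div_le_div_of_nonneg_right hlow (by positivity)
  · have e2 : 1/(2*π^2) / (N:ℝ) = (1/(π*N))/(2*π) := by
      field_simp
    rw [e2]
    exact div_le_div_of_nonneg_right hupp.le (by positivity)

lemma theta_iff (x : ℝ) : thetaField x = 0 ↔ fAux x = 0 := by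
  unfold thetaField fAux
  have hD : (0:ℝ) < 1 + 4 * π ^ 2 * (Real.sin (2 * π * x)) ^ 2 := by positivity
  rw [div_eq_zero_iff]
  simp only [neg_eq_zero]
  constructor
  · rintro (h | h)
    · exact h
    · exact absurd h hD.ne'
  · exact Or.inl

lemma cot_iff (x : ℝ) (hx : (1:ℝ)/2 ≤ x) :
    (2*π*x = Real.cot (2*π*x)) ↔ fAux x = 0 := by
  have hpi := Real.pi_pos
  rw [Real.cot_eq_cos_div_sin]
  by_cases hs : Real.sin (2*π*x) = 0
  · rw [hs]
    have hc : (Real.cos (2*π*x))^2 = 1 := by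
      have := Real.sin_sq_add_cos_sq (2*π*x)
      rw [hs] at this; nlinarith
    constructor
    · intro h
      rw [div_zero] at h
      exfalso; nlinarith
    · intro h
      unfold fAux at h
      rw [hs] at h
      exfalso; nlinarith
  · rw [eq_div_iff hs]
    unfold fAux
    rw [sub_eq_zero]
    constructor <;> intro h <;> linarith

theorem equilibria_near_integers :
    ∃ c₁ > (0 : ℝ), ∃ c₂ > (0 : ℝ), ∃ N₀ : ℕ, ∀ N : ℕ, N₀ ≤ N →
      ∃ a b : ℝ, a ≠ b ∧
        {x ∈ Set.Icc ((N : ℝ) - 1 / 2) ((N : ℝ) + 1 / 2) |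
          2 * π * x = Real.cot (2 * π * x)} = {a, b} ∧
        {x ∈ Set.Icc ((N : ℝ) - 1 / 2) ((N : ℝ) + 1 / 2) | thetaField x = 0}
          = {a, b} ∧
        c₁ / (N : ℝ) ≤ |a - ((N : ℝ) - 1 / 2)| ∧
        |a - ((N : ℝ) - 1 / 2)| ≤ c₂ / (N : ℝ) ∧
        c₁ / (N : ℝ) ≤ |b - (N : ℝ)| ∧
        |b - (N : ℝ)| ≤ c₂ / (N : ℝ) := by
  have hpi := Real.pi_pos
  have hpi3 := Real.pi_gt_three
  refine ⟨1/(16*π^2), by positivity, 1/(2*π^2), by positivity, 1, ?_⟩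
  intro N hN
  have hN1 : (1:ℝ) ≤ N := by exact_mod_cast hN
  -- existence of a
  have hIVa : (0:ℝ) ∈ Set.Ioo (fAux ((N:ℝ) - 1/2)) (fAux (N:ℝ)) := by
    rw [fAux_at_half_sub, fAux_at_nat]; norm_num
  obtain ⟨a, haI, hfa⟩ := intermediate_value_Ioo (by linarith : (N:ℝ) - 1/2 ≤ (N:ℝ))
    fAux_cont.continuousOn hIVa
  have hIVb : (0:ℝ) ∈ Set.Ioo (fAux ((N:ℝ) + 1/2)) (fAux (N:ℝ)) := by
    rw [fAux_at_half_add, fAux_at_nat]; norm_num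
  obtain ⟨b, hbI, hfb⟩ := intermediate_value_Ioo' (by linarith : (N:ℝ) ≤ (N:ℝ) + 1/2)
    fAux_cont.continuousOn hIVb
  have hanb : a ≠ b := by
    have := haI.2; have := hbI.1; exact ne_of_lt (by linarith)
  -- the zero set of fAux
  have hSet : {x ∈ Set.Icc ((N:ℝ) - 1/2) ((N:ℝ) + 1/2) | fAux x = 0} = {a, b} := by
    ext x
    simp only [Set.mem_setOf_eq, Set.mem_insert_iff, Set.mem_singleton_iff, Set.mem_Icc]
    constructor
    · rintro ⟨hxI, hfx⟩
      have hxl : x ≠ (N:ℝ) - 1/2 := by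
        intro h; rw [h, fAux_at_half_sub] at hfx; norm_num at hfx
      have hxm : x ≠ (N:ℝ) := by intro h; rw [h, fAux_at_nat] at hfx; norm_num at hfx
      have hxr : x ≠ (N:ℝ) + 1/2 := by
        intro h; rw [h, fAux_at_half_add] at hfx; norm_num at hfx
      rcases lt_trichotomy x (N:ℝ) with hlt | heq | hgt
      · left
        have hmem : x ∈ Set.Ioo ((N:ℝ) - 1/2) (N:ℝ) := ⟨lt_of_le_of_ne hxI.1 (Ne.symm hxl), hlt⟩
        have hanti := hAux_anti (l := (N:ℝ) - 1/2) (r := (N:ℝ))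
          (fun y hy => (sin_neg_on N y hy).ne)
        have h1 : hAux x = 0 := (hAux_eq_zero_iff x (sin_neg_on N x hmem).ne).mpr hfx
        have h2 : hAux a = 0 := (hAux_eq_zero_iff a (sin_neg_on N a haI).ne).mpr hfa
        exact hanti.injOn hmem haI (by rw [h1, h2])
      · exact absurd heq hxm
      · right
        have hmem : x ∈ Set.Ioo (N:ℝ) ((N:ℝ) + 1/2) := ⟨hgt, lt_of_le_of_ne hxI.2 hxr⟩
        have hanti := hAux_anti (l := (N:ℝ)) (r := (N:ℝ) + 1/2)
          (fun y hy => (sin_pos_on N y hy).ne')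
        have h1 : hAux x = 0 := (hAux_eq_zero_iff x (sin_pos_on N x hmem).ne').mpr hfx
        have h2 : hAux b = 0 := (hAux_eq_zero_iff b (sin_pos_on N b hbI).ne').mpr hfb
        exact hanti.injOn hmem hbI (by rw [h1, h2])
    · rintro (rfl | rfl)
      · exact ⟨⟨haI.1.le, by linarith [haI.2]⟩, hfa⟩
      · exact ⟨⟨by linarith [hbI.1], hbI.2.le⟩, hfb⟩
  refine ⟨a, b, hanb, ?_, ?_, ?_⟩
  · rw [← hSet]
    ext x
    simp only [Set.mem_setOf_eq, and_congr_right_iff, Set.mem_Icc]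
    intro hx
    exact cot_iff x (by linarith [hx.1])
  · rw [← hSet]
    ext x
    simp only [Set.mem_setOf_eq, and_congr_right_iff, Set.mem_Icc]
    intro hx
    exact theta_iff x
  -- quantitative bounds
  have hba : ∀ z : ℝ, fAux z = 0 → Real.cos (2*π*z) = 2*π*z * Real.sin (2*π*z) := by
    intro z hz; unfold fAux at hz; linarith
  -- bound for a
  have haeps : 0 < a - ((N:ℝ) - 1/2) ∧ a - ((N:ℝ) - 1/2) < 1/2 := by
    constructor
    · linarith [haI.1]
    · linarith [haI.2]
  have hua : 2*π*(a - ((N:ℝ) - 1/2)) ∈ Set.Ioo (0:ℝ) π := by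
    constructor
    · nlinarith [haeps.1]
    · nlinarith [haeps.2]
  have heqa : Real.cos (2*π*(a-((N:ℝ) - 1/2))) = 2*π*a * Real.sin (2*π*(a-((N:ℝ) - 1/2))) := by
    have h0 := hba a hfa
    have hsa : Real.sin (2*π*a) = - Real.sin (2*π*(a-((N:ℝ) - 1/2))) := by
      rw [sin_shift a N]
      rw [show 2*π*(a - (N:ℝ)) = 2*π*(a-((N:ℝ) - 1/2)) - π by ring, Real.sin_sub_pi]
    have hca : Real.cos (2*π*a) = - Real.cos (2*π*(a-((N:ℝ) - 1/2))) := by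
      rw [cos_shift a N]
      rw [show 2*π*(a - (N:ℝ)) = 2*π*(a-((N:ℝ) - 1/2)) - π by ring, Real.cos_sub_pi]
    rw [hsa, hca] at h0
    linarith
  have hboundsa := bound_lemma N hN a (2*π*(a-((N:ℝ) - 1/2)))
    (by nlinarith [haI.1]) (by nlinarith [haI.2]) hua heqa
  have heps_eq : 2*π*(a-((N:ℝ) - 1/2)) / (2*π) = a - ((N:ℝ) - 1/2) := by field_simp
  rw [heps_eq] at hboundsa
  have habs : |a - ((N:ℝ) - 1/2)| = a - ((N:ℝ) - 1/2) := abs_of_pos haeps.1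
  -- bound for b
  have hbeps : 0 < b - (N:ℝ) ∧ b - (N:ℝ) < 1/2 := by
    exact ⟨by linarith [hbI.1], by linarith [hbI.2]⟩
  have hub : 2*π*(b - (N:ℝ)) ∈ Set.Ioo (0:ℝ) π := by
    constructor
    · nlinarith [hbeps.1]
    · nlinarith [hbeps.2]
  have heqb : Real.cos (2*π*(b-(N:ℝ))) = 2*π*b * Real.sin (2*π*(b-(N:ℝ))) := by
    have h0 := hba b hfb
    rw [sin_shift b N, cos_shift b N] at h0
    exact h0
  have hboundsb := bound_lemma N hN b (2*π*(b-(N:ℝ)))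
    (by nlinarith [hbI.1]) (by nlinarith [hbI.2]) hub heqb
  have heps_eqb : 2*π*(b-(N:ℝ)) / (2*π) = b - (N:ℝ) := by field_simp
  rw [heps_eqb] at hboundsb
  have hbabs : |b - (N:ℝ)| = b - (N:ℝ) := abs_of_pos hbeps.1
  refine ⟨?_, ?_, ?_, ?_⟩
  · rw [habs]; exact hboundsa.1
  · rw [habs]; exact hboundsa.2
  · rw [hbabs]; exact hboundsb.1
  · rw [hbabs]; exact hboundsb.2
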